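/- arXiv:1403.7983 — 3 statements merged into one kernel-verified Lean document; each statement's English description precedes it below -/
import Mathlib

section
/- Let r ∈ ℕ. Let S be a piecewise polynomial function of degree ≤ r on [-1,1] with its only breakpoint at 0, with polynomial pieces p_1 := S|_{[-1,0)} and p_2 := S|_{(0,1]} (each extended polynomially). If S is nonnegative on [-1,1], then there exists an interval I with I ⊂ [-1,0] or I ⊂ [0,1], of length |I| ≥ 1/(4r²), such that S(x) ≥ c_1(r) ‖p_1 − p_2‖_{L_∞[-1,1]} for all x ∈ I, where c_1(r) > 0 depends only on r. -/
open MeasureTheory Set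
open scoped ENNReal NNReal Classical

noncomputable section

/-- Extended knot indexing: `z j` for `j ≤ n`, `z n` for `j > n`. -/
def zext (z : ℕ → ℝ) (n j : ℕ) : ℝ := z (min j n)

/-- `z` is a partition of `[a, b]` into `n` subintervals. -/
def IsPartitionOn (z : ℕ → ℝ) (n : ℕ) (a b : ℝ) : Prop :=
  z 0 = a ∧ z n = b ∧ ∀ i < n, z i < z (i + 1)

/-- `z` is a partition of `[-1, 1]` into `n` subintervals. -/
def IsPartition (z : ℕ → ℝ) (n : ℕ) : Prop := IsPartitionOn z n (-1) 1

/-- `s` is a piecewise polynomial function of degree `≤ r` with knots `z 0, …, z n`. -/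
def IsPPF (r : ℕ) (z : ℕ → ℝ) (n : ℕ) (s : ℝ → ℝ) : Prop :=
  ∀ i < n, ∃ P : Polynomial ℝ, P.degree ≤ (r : WithBot ℕ) ∧
    ∀ x ∈ Set.Ioo (z i) (z (i + 1)), s x = P.eval x

/-- Divided differences of `f` at the points `t 0, …, t q`. -/
def divDiff (f : ℝ → ℝ) : ℕ → (ℕ → ℝ) → ℝ
  | 0, t => f (t 0)
  | q + 1, t => (divDiff f q (fun i => t (i + 1)) - divDiff f q t) / (t (q + 1) - t 0)

/-- `f` is `q`-monotone on `J`: all divided differences of order `q` at points of `J`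
are nonnegative. -/
def QMonotoneOn (q : ℕ) (f : ℝ → ℝ) (J : Set ℝ) : Prop :=
  ∀ t : ℕ → ℝ, StrictMono t → (∀ i, i ≤ q → t i ∈ J) → 0 ≤ divDiff f q t

/-- The symmetric `k`-th difference of `f` with step `h`, set to `0` when the nodes leave `J`. -/
def symmDiffk (f : ℝ → ℝ) (k : ℕ) (h : ℝ) (J : Set ℝ) (x : ℝ) : ℝ :=
  if x - k * h / 2 ∈ J ∧ x + k * h / 2 ∈ J then
    ∑ i ∈ Finset.range (k + 1), (-1 : ℝ) ^ (k - i) * (k.choose i : ℝ) * f (x - k * h / 2 + i * h)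
  else 0

/-- `ω_k(f, t, J)_p`, the `k`-th modulus of smoothness of `f` on `J` in `L_p`. -/
def modulus (k : ℕ) (f : ℝ → ℝ) (t : ℝ) (J : Set ℝ) (p : ℝ≥0∞) : ℝ≥0∞ :=
  ⨆ h ∈ Set.Ioc (0 : ℝ) t, eLpNorm (symmDiffk f k h J) p (volume.restrict J)

/-- `ω_k(f, [a,b])_p := ω_k(f, b - a, [a,b])_p`. -/
def modulusIcc (k : ℕ) (f : ℝ → ℝ) (a b : ℝ) (p : ℝ≥0∞) : ℝ≥0∞ :=
  modulus k f (b - a) (Set.Icc a b) p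

/-- `zt` (a partition of `[-1,1]` into `m` pieces) is a `δ`-remesh of `z`. -/
def IsRemesh (δ : ℝ) (z : ℕ → ℝ) (n : ℕ) (zt : ℕ → ℝ) (m : ℕ) : Prop :=
  ∀ j < n, ∀ i < m,
    (Set.Icc (zt i) (zt (i + 1)) ∩ Set.Ioo (z j) (z (j + 1))).Nonempty →
      ∀ ν : ℕ, j - 1 ≤ ν → ν ≤ j + 1 → ν < n →
        zt (i + 1) - zt i ≤ δ * (z (ν + 1) - z ν)

/-- Left endpoint of `𝒥_j = [(z_{j-1}+z_j)/2, (z_j+z_{j+1})/2]`. -/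
def JcalL (z : ℕ → ℝ) (n j : ℕ) : ℝ := (zext z n (j - 1) + zext z n j) / 2

/-- Right endpoint of `𝒥_j = [(z_{j-1}+z_j)/2, (z_j+z_{j+1})/2]`. -/
def JcalR (z : ℕ → ℝ) (n j : ℕ) : ℝ := (zext z n j + zext z n (j + 1)) / 2

/-- The scale `max_{0≤j≤n-1} max(|J_{j+1}|/|J_j|, |J_{j-1}|/|J_j|)` of a partition. -/
def scaleP (z : ℕ → ℝ) (n : ℕ) : ℝ :=
  sSup ((fun j => max ((zext z n (j + 2) - z (j + 1)) / (z (j + 1) - z j))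
      ((z j - z (j - 1)) / (z (j + 1) - z j))) '' Set.Iio n)

/-- The uniform partition `U_n`. -/
def uniformP (n j : ℕ) : ℝ := -1 + 2 * (j : ℝ) / n

/-- The Chebyshev partition `Ch_n`. -/
def chebP (n j : ℕ) : ℝ := -Real.cos ((j : ℝ) * Real.pi / n)

/-- `φ(x) = √(1 - x²)`. -/
def phiDT (x : ℝ) : ℝ := Real.sqrt (1 - x ^ 2)

/-- The Ditzian–Totik modulus of smoothness `ω_k^φ(f, t)_p` on `[-1,1]`. -/
def modulusDT (k : ℕ) (f : ℝ → ℝ) (t : ℝ) (p : ℝ≥0∞) : ℝ≥0∞ :=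
  ⨆ h ∈ Set.Ioc (0 : ℝ) t,
    eLpNorm (fun x => symmDiffk f k (h * phiDT x) (Set.Icc (-1) 1) x) p
      (volume.restrict (Set.Icc (-1 : ℝ) 1))

/-- `f ∈ W_p^ν[a,b]` with `g = f^{(ν)}`:  for `ν ≥ 1`, `f ∈ C^{ν-1}`, `f^{(ν-1)}` is absolutely
continuous with a.e. derivative `g ∈ L_p`; for `ν = 0` it is just `f ∈ L_p` and `g = f`. -/
def MemSobolevWith (p : ℝ≥0∞) (ν : ℕ) (f g : ℝ → ℝ) (a b : ℝ) : Prop :=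
  if ν = 0 then MemLp f p (volume.restrict (Set.Icc a b)) ∧ g = f
  else ContDiffOn ℝ (ν - 1 : ℕ) f (Set.Icc a b) ∧
    MemLp g p (volume.restrict (Set.Icc a b)) ∧
    ∀ x ∈ Set.Icc a b, iteratedDerivWithin (ν - 1) f (Set.Icc a b) x =
      iteratedDerivWithin (ν - 1) f (Set.Icc a b) a + ∫ t in a..x, g t

/-- Splines of degree `≤ r` of minimal defect (`C^{r-1}[-1,1]`) with knots `z 0, …, z n`. -/
def SplineMD (r : ℕ) (z : ℕ → ℝ) (n : ℕ) : Set (ℝ → ℝ) :=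
  {u | IsPPF r z n u ∧ ContDiffOn ℝ (r - 1 : ℕ) u (Set.Icc (-1) 1)}

end


open Polynomial in
lemma lagrange_bound (r : ℕ) (p : Polynomial ℝ) (hp : p.degree ≤ (r : WithBot ℕ))
    (v : ℕ → ℝ) (g D B : ℝ) (hg : 0 < g) (hD0 : 0 ≤ D) (hB0 : 0 ≤ B)
    (hsep : ∀ j k, j ≤ r → k ≤ r → j ≠ k → g ≤ |v j - v k|)
    (x : ℝ) (hD : ∀ j, j ≤ r → |x - v j| ≤ D)
    (hB : ∀ j, j ≤ r → |p.eval (v j)| ≤ B) :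
    |p.eval x| ≤ ((r : ℝ) + 1) * (D / g) ^ r * B := by
  have hinj : Set.InjOn v (Finset.range (r + 1)) := by
    intro j hj k hk hjk
    by_contra hne
    have := hsep j k (by simpa using Nat.lt_succ_iff.mp (by simpa using hj))
      (by simpa using Nat.lt_succ_iff.mp (by simpa using hk)) hne
    rw [hjk, sub_self, abs_zero] at this
    linarith
  have hdeg : p.degree < (Finset.range (r + 1)).card := by
    rw [Finset.card_range]
    exact lt_of_le_of_lt hp (by exact_mod_cast Nat.lt_succ_self r)
  have hrep := Lagrange.eq_interpolate hinj hdeg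
  have heval : p.eval x = ∑ j ∈ Finset.range (r + 1),
      p.eval (v j) * eval x (Lagrange.basis (Finset.range (r + 1)) v j) := by
    conv_lhs => rw [hrep]
    rw [Lagrange.interpolate_apply, eval_finset_sum]
    simp [eval_mul]
  rw [heval]
  have hbasis : ∀ j ∈ Finset.range (r + 1),
      |eval x (Lagrange.basis (Finset.range (r + 1)) v j)| ≤ (D / g) ^ r := by
    intro j hj
    have hj' : j ≤ r := Nat.lt_succ_iff.mp (by simpa using hj)
    rw [Lagrange.basis, eval_prod, Finset.abs_prod]
    have hcard : ((Finset.range (r + 1)).erase j).card = r := by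
      rw [Finset.card_erase_of_mem hj, Finset.card_range]; omega
    calc ∏ k ∈ (Finset.range (r + 1)).erase j, |eval x (Lagrange.basisDivisor (v j) (v k))|
        ≤ ∏ k ∈ (Finset.range (r + 1)).erase j, (D / g) := by
          apply Finset.prod_le_prod (fun _ _ => abs_nonneg _)
          intro k hk
          have hk' : k ≤ r := Nat.lt_succ_iff.mp (by simpa using (Finset.mem_erase.mp hk).2)
          have hkj : j ≠ k := fun h => (Finset.mem_erase.mp hk).1 h.symm
          have hsepk := hsep j k hj' hk' hkj
          rw [Lagrange.basisDivisor]
          simp only [eval_mul, eval_C, eval_sub, eval_X, abs_mul, abs_inv]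
          have h1 : |v j - v k|⁻¹ ≤ g⁻¹ := by
            apply inv_anti₀ hg hsepk
          calc |v j - v k|⁻¹ * |x - v k| ≤ g⁻¹ * D :=
                mul_le_mul h1 (hD k hk') (abs_nonneg _) (by positivity)
            _ = D / g := by rw [div_eq_mul_inv, mul_comm]
      _ = (D / g) ^ r := by rw [Finset.prod_const, hcard]
  calc |∑ j ∈ Finset.range (r + 1), p.eval (v j) * eval x (Lagrange.basis (Finset.range (r + 1)) v j)|
      ≤ ∑ j ∈ Finset.range (r + 1), |p.eval (v j) * eval x (Lagrange.basis (Finset.range (r + 1)) v j)| :=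
        Finset.abs_sum_le_sum_abs _ _
    _ ≤ ∑ j ∈ Finset.range (r + 1), B * (D / g) ^ r := by
        apply Finset.sum_le_sum
        intro j hj
        rw [abs_mul]
        exact mul_le_mul (hB j (Nat.lt_succ_iff.mp (by simpa using hj))) (hbasis j hj)
          (abs_nonneg _) hB0
    _ = ((r : ℝ) + 1) * (D / g) ^ r * B := by
        rw [Finset.sum_const, Finset.card_range]
        push_cast; ring

open Polynomial in
lemma side_lemma (r : ℕ) (hr : 1 ≤ r) (p : Polynomial ℝ) (hdeg : p.degree ≤ (r : WithBot ℕ))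
    (hpos : ∀ x ∈ Set.Icc (-1 : ℝ) (-(1 / (4 * (r : ℝ) ^ 2))), 0 ≤ p.eval x)
    (ν : ℝ) (hν : 0 < ν) (x1 : ℝ) (hx1 : x1 ∈ Set.Icc (-1 : ℝ) 1) (hval : ν ≤ |p.eval x1|) :
    ∃ a b : ℝ, a < b ∧ b - a = 1 / (4 * (r : ℝ) ^ 2) ∧
      Set.Icc a b ⊆ Set.Icc (-1 : ℝ) (-(1 / (4 * (r : ℝ) ^ 2))) ∧
      ∀ x ∈ Set.Icc a b,
        ν / (4 * ((r : ℝ) + 1) ^ 2 * (4 * (r : ℝ)) ^ r * (4 * (r : ℝ) ^ 2) ^ r) ≤ p.eval x := by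
  have hrR : (1 : ℝ) ≤ (r : ℝ) := by exact_mod_cast hr
  have hr0 : (0 : ℝ) < (r : ℝ) := by linarith
  obtain ⟨L, hLdef⟩ : ∃ x : ℝ, x = 1 / (4 * (r : ℝ) ^ 2) := ⟨_, rfl⟩
  rw [← hLdef] at hpos ⊢
  have hL : 0 < L := by rw [hLdef]; positivity
  have hL4 : L ≤ 1 / 4 := by
    rw [hLdef, div_le_div_iff₀ (by positivity) (by norm_num)]; nlinarith
  have hLmul : (4 * (r : ℝ) ^ 2) * L = 1 := by rw [hLdef]; field_simp
  obtain ⟨A, hAdef⟩ : ∃ x : ℝ, x = (4 * (r : ℝ)) ^ r := ⟨_, rfl⟩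
  have hA : 0 < A := by rw [hAdef]; positivity
  obtain ⟨Bc, hBdef⟩ : ∃ x : ℝ, x = (4 * (r : ℝ) ^ 2) ^ r := ⟨_, rfl⟩
  have hB : 0 < Bc := by rw [hBdef]; positivity
  obtain ⟨μ, hμdef⟩ : ∃ x : ℝ, x = ν / (2 * (((r : ℝ) + 1) * A)) := ⟨_, rfl⟩
  have hμ : 0 < μ := by rw [hμdef]; positivity
  obtain ⟨c, hcdef⟩ : ∃ x : ℝ, x = μ / (2 * (((r : ℝ) + 1) * Bc)) := ⟨_, rfl⟩
  have hc : 0 < c := by rw [hcdef]; positivity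
  -- the nodes z j = -1 + j/(2r)
  obtain ⟨z, hzdef⟩ : ∃ z : ℕ → ℝ, z = fun j : ℕ => -1 + (j : ℝ) / (2 * (r : ℝ)) :=
    ⟨fun j : ℕ => -1 + (j : ℝ) / (2 * (r : ℝ)), rfl⟩
  have hzmem : ∀ j, j ≤ r → -1 ≤ z j ∧ z j ≤ -(1/2) := by
    intro j hj
    have hjr : (j : ℝ) ≤ (r : ℝ) := by exact_mod_cast hj
    have h1 : 0 ≤ (j : ℝ) / (2 * (r : ℝ)) := by positivity
    have h2 : (j : ℝ) / (2 * (r : ℝ)) ≤ 1 / 2 := by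
      rw [div_le_div_iff₀ (by positivity) (by norm_num)]; linarith
    rw [hzdef]
    constructor <;> [linarith; linarith]
  have hsepnat : ∀ j k : ℕ, j ≠ k → (1 : ℝ) ≤ |(j : ℝ) - (k : ℝ)| := by
    intro j k hjk
    rcases Nat.lt_or_ge j k with h | h
    · have : (j : ℝ) + 1 ≤ (k : ℝ) := by exact_mod_cast h
      rw [abs_sub_comm, abs_of_nonneg (by linarith)]; linarith
    · have hlt : k < j := lt_of_le_of_ne h (Ne.symm hjk)
      have : (k : ℝ) + 1 ≤ (j : ℝ) := by exact_mod_cast hlt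
      rw [abs_of_nonneg (by linarith)]; linarith
  -- Step 1 : some node where p is at least μ
  have step1 : ∃ j, j ≤ r ∧ μ ≤ p.eval (z j) := by
    by_contra hcon
    push_neg at hcon
    have hbnd := lagrange_bound r p hdeg z (1 / (2 * (r : ℝ))) 2 μ (by positivity)
      (by norm_num) (le_of_lt hμ) ?_ x1 ?_ ?_
    · have h2r : (2 : ℝ) / (1 / (2 * (r : ℝ))) = 4 * (r : ℝ) := by
        field_simp; ring
      rw [h2r, ← hAdef] at hbnd
      have h2 : ((r : ℝ) + 1) * A * μ = ν / 2 := by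
        rw [hμdef]; field_simp
      linarith [hval.trans hbnd]
    · intro j k hj hk hjk
      have : z j - z k = ((j : ℝ) - (k : ℝ)) / (2 * (r : ℝ)) := by rw [hzdef]; ring
      rw [this, abs_div, abs_of_pos (by positivity : (0:ℝ) < 2 * (r:ℝ))]
      exact div_le_div_of_nonneg_right (hsepnat j k hjk) (by positivity)
    · intro j hj
      obtain ⟨hz1, hz2⟩ := hzmem j hj
      obtain ⟨hx1a, hx1b⟩ := hx1
      rw [abs_le]; constructor <;> [linarith; linarith]
    · intro j hj
      obtain ⟨hz1, hz2⟩ := hzmem j hj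
      have h0 : 0 ≤ p.eval (z j) := hpos _ ⟨hz1, by linarith⟩
      rw [abs_of_nonneg h0]
      exact le_of_lt (hcon j hj)
  obtain ⟨j0, hj0, hxstar⟩ := step1
  obtain ⟨hxsa, hxsb⟩ := hzmem j0 hj0
  -- Step 2 : find a good window
  have key : ∃ i : ℕ, i + 2 ≤ 4 * r ^ 2 ∧
      ∀ x ∈ Set.Icc (-1 + (i : ℝ) * L) (-1 + (i : ℝ) * L + L), c ≤ p.eval x := by
    by_contra hcon
    push_neg at hcon
    have H : ∀ j : ℕ, ∃ x, j ≤ r →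
        (-1 + ((2 * j : ℕ) : ℝ) * L ≤ x ∧ x ≤ -1 + ((2 * j : ℕ) : ℝ) * L + L) ∧
          p.eval x < c := by
      intro j
      by_cases hj : j ≤ r
      · obtain ⟨x, hx, hxc⟩ := hcon (2 * j) (by nlinarith)
        exact ⟨x, fun _ => ⟨hx, hxc⟩⟩
      · exact ⟨0, fun h => absurd h hj⟩
    choose y hy using H
    have hymem : ∀ j, j ≤ r → -1 + 2 * (j : ℝ) * L ≤ y j ∧ y j ≤ -1 + 2 * (j : ℝ) * L + L := by
      intro j hj
      obtain ⟨⟨h1, h2⟩, _⟩ := hy j hj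
      push_cast at h1 h2
      constructor <;> linarith
    have hyIcc : ∀ j, j ≤ r → -1 ≤ y j ∧ y j ≤ -L := by
      intro j hj
      obtain ⟨h1, h2⟩ := hymem j hj
      have hjr : (j : ℝ) ≤ (r : ℝ) := by exact_mod_cast hj
      have hjL : 0 ≤ (j : ℝ) * L := mul_nonneg (Nat.cast_nonneg j) hL.le
      have hrL : (j : ℝ) * L ≤ (r : ℝ) * L := mul_le_mul_of_nonneg_right hjr hL.le
      have h24 : 2 * (r : ℝ) + 2 ≤ 4 * (r : ℝ) ^ 2 := by nlinarith [sq_nonneg ((r : ℝ) - 1)]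
      have hfree : (2 * (r : ℝ) + 2) * L ≤ (4 * (r : ℝ) ^ 2) * L :=
        mul_le_mul_of_nonneg_right h24 hL.le
      constructor
      · linarith
      · linarith [hLmul]
    have hbnd := lagrange_bound r p hdeg y L 1 c hL (by norm_num) (le_of_lt hc) ?_ (z j0) ?_ ?_
    · have h1L : (1 : ℝ) / L = 4 * (r : ℝ) ^ 2 := by
        rw [hLdef]; field_simp
      rw [h1L, ← hBdef] at hbnd
      rw [abs_of_nonneg (by linarith : (0:ℝ) ≤ p.eval (z j0))] at hbnd
      have h2 : ((r : ℝ) + 1) * Bc * c = μ / 2 := by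
        rw [hcdef]; field_simp
      linarith [hxstar.trans hbnd]
    · intro j k hj hk hjk
      obtain ⟨hj1, hj2⟩ := hymem j hj
      obtain ⟨hk1, hk2⟩ := hymem k hk
      rcases Nat.lt_or_ge j k with h | h
      · have hjk1 : (j : ℝ) + 1 ≤ (k : ℝ) := by exact_mod_cast h
        have hp : ((j : ℝ) + 1) * L ≤ (k : ℝ) * L := mul_le_mul_of_nonneg_right hjk1 hL.le
        rw [abs_sub_comm, abs_of_nonneg (by linarith)]
        linarith
      · have hlt : k < j := lt_of_le_of_ne h (Ne.symm hjk)
        have hjk1 : (k : ℝ) + 1 ≤ (j : ℝ) := by exact_mod_cast hlt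
        have hp : ((k : ℝ) + 1) * L ≤ (j : ℝ) * L := mul_le_mul_of_nonneg_right hjk1 hL.le
        rw [abs_of_nonneg (by linarith)]
        linarith
    · intro j hj
      obtain ⟨h1, h2⟩ := hyIcc j hj
      rw [abs_le]; constructor <;> [linarith; linarith]
    · intro j hj
      have h0 : 0 ≤ p.eval (y j) := hpos _ ⟨(hyIcc j hj).1, (hyIcc j hj).2⟩
      rw [abs_of_nonneg h0]
      exact le_of_lt (hy j hj).2
  obtain ⟨i, hi, hwin⟩ := key
  refine ⟨-1 + (i : ℝ) * L, -1 + (i : ℝ) * L + L, by linarith, by ring, ?_, ?_⟩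
  · intro x hx
    obtain ⟨hxa, hxb⟩ := hx
    have hiR : (i : ℝ) + 2 ≤ 4 * (r : ℝ) ^ 2 := by exact_mod_cast hi
    have hfin : ((i : ℝ) + 2) * L ≤ 1 := by
      have := mul_le_mul_of_nonneg_right hiR hL.le
      linarith [hLmul]
    constructor
    · have : 0 ≤ (i : ℝ) * L := by positivity
      linarith
    · linarith
  · intro x hx
    have hcx := hwin x hx
    have hEq : ν / (4 * ((r : ℝ) + 1) ^ 2 * (4 * (r : ℝ)) ^ r * (4 * (r : ℝ) ^ 2) ^ r) = c := by
      rw [hcdef, hμdef, ← hAdef, ← hBdef, div_div]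
      ring_nf
    linarith [hEq ▸ hcx]

open Polynomial in
/-- Lemma 3.3: a nonnegative ppf with one breakpoint is large on a long
interval lying on one side of the breakpoint. -/
theorem statement10 (r : ℕ) (hr : 1 ≤ r) :
    ∃ c1 : ℝ, 0 < c1 ∧
      ∀ (S : ℝ → ℝ) (p1 p2 : Polynomial ℝ),
        p1.degree ≤ (r : WithBot ℕ) → p2.degree ≤ (r : WithBot ℕ) →
        (∀ x ∈ Set.Ico (-1 : ℝ) 0, S x = p1.eval x) →
        (∀ x ∈ Set.Ioc (0 : ℝ) 1, S x = p2.eval x) →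
        (∀ x ∈ Set.Icc (-1 : ℝ) 1, 0 ≤ S x) →
        ∃ a b : ℝ, a < b ∧ 1 / (4 * (r : ℝ) ^ 2) ≤ b - a ∧
          (Set.Icc a b ⊆ Set.Icc (-1) 0 ∨ Set.Icc a b ⊆ Set.Icc 0 1) ∧
          ∀ x ∈ Set.Icc a b,
            c1 * sSup ((fun y => |p1.eval y - p2.eval y|) '' Set.Icc (-1 : ℝ) 1) ≤ S x := by
  have hrR : (1 : ℝ) ≤ (r : ℝ) := by exact_mod_cast hr
  have hr0 : (0 : ℝ) < (r : ℝ) := by linarith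
  have hL : (0 : ℝ) < 1 / (4 * (r : ℝ) ^ 2) := by positivity
  have hL4 : 1 / (4 * (r : ℝ) ^ 2) ≤ 1 / 4 := by
    rw [div_le_div_iff₀ (by positivity) (by norm_num)]; nlinarith
  have hK : (0 : ℝ) < 4 * ((r : ℝ) + 1) ^ 2 * (4 * (r : ℝ)) ^ r * (4 * (r : ℝ) ^ 2) ^ r := by
    positivity
  refine ⟨1 / (2 * (4 * ((r : ℝ) + 1) ^ 2 * (4 * (r : ℝ)) ^ r * (4 * (r : ℝ) ^ 2) ^ r)),
    by positivity, ?_⟩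
  intro S p1 p2 hd1 hd2 hS1 hS2 hSnn
  have hcont : ContinuousOn (fun y => |p1.eval y - p2.eval y|) (Set.Icc (-1 : ℝ) 1) :=
    ((p1.continuous_aeval.sub p2.continuous_aeval).abs).continuousOn
  obtain ⟨y0, hy0mem, hy0max⟩ := isCompact_Icc.exists_isMaxOn
    (f := fun y => |p1.eval y - p2.eval y|) (Set.nonempty_Icc.mpr (by norm_num)) hcont
  have hM : sSup ((fun y => |p1.eval y - p2.eval y|) '' Set.Icc (-1 : ℝ) 1)
      = |p1.eval y0 - p2.eval y0| :=
    IsGreatest.csSup_eq ⟨⟨y0, hy0mem, rfl⟩, fun v ⟨y, hy, hvy⟩ => hvy ▸ hy0max hy⟩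
  set M : ℝ := |p1.eval y0 - p2.eval y0| with hMdef
  rw [hM]
  rcases le_or_gt M 0 with hM0 | hMpos
  · -- trivial case
    refine ⟨-(1/2 : ℝ), -(1/4 : ℝ), by norm_num, by linarith [hL4], Or.inl ?_, ?_⟩
    · intro x ⟨hx1, hx2⟩; exact ⟨by linarith, by linarith⟩
    · intro x ⟨hx1, hx2⟩
      have h1 : 0 ≤ S x := hSnn x ⟨by linarith, by linarith⟩
      have h2 : 1 / (2 * (4 * ((r : ℝ) + 1) ^ 2 * (4 * (r : ℝ)) ^ r * (4 * (r : ℝ) ^ 2) ^ r))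
          * M ≤ 0 := mul_nonpos_of_nonneg_of_nonpos (by positivity) hM0
      linarith
  · have htri : M / 2 ≤ |p1.eval y0| ∨ M / 2 ≤ |p2.eval y0| := by
      by_contra hcc
      push_neg at hcc
      have := abs_sub (p1.eval y0) (p2.eval y0)
      have habs : M ≤ |p1.eval y0| + |p2.eval y0| := abs_sub _ _
      linarith [hcc.1, hcc.2]
    rcases htri with hca | hca
    · -- left case, use p1
      have hpos1 : ∀ x ∈ Set.Icc (-1 : ℝ) (-(1 / (4 * (r : ℝ) ^ 2))), 0 ≤ p1.eval x := by
        intro x ⟨hxa, hxb⟩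
        rw [← hS1 x ⟨hxa, by linarith⟩]
        exact hSnn x ⟨hxa, by linarith⟩
      obtain ⟨a, b, hab, hlen, hsub, hbig⟩ :=
        side_lemma r hr p1 hd1 hpos1 (M / 2) (by linarith) y0 hy0mem hca
      refine ⟨a, b, hab, le_of_eq hlen.symm, Or.inl fun x hx => ?_, ?_⟩
      · obtain ⟨h1, h2⟩ := hsub hx
        exact ⟨h1, by linarith⟩
      · intro x hx
        obtain ⟨h1, h2⟩ := hsub hx
        rw [hS1 x ⟨h1, by linarith⟩]
        have := hbig x hx
        have heq : M / 2 / (4 * ((r : ℝ) + 1) ^ 2 * (4 * (r : ℝ)) ^ r * (4 * (r : ℝ) ^ 2) ^ r)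
            = 1 / (2 * (4 * ((r : ℝ) + 1) ^ 2 * (4 * (r : ℝ)) ^ r * (4 * (r : ℝ) ^ 2) ^ r)) * M := by
          field_simp
        linarith [heq ▸ this]
    · -- right case, use reflected p2
      have hq : ∀ x : ℝ, (p2.comp (-X)).eval x = p2.eval (-x) := by
        intro x; simp [eval_comp]
      have hqdeg : (p2.comp (-X)).degree ≤ (r : WithBot ℕ) := by
        have h1 : (p2.comp (-X)).natDegree = p2.natDegree := by
          rw [natDegree_comp]
          simp [natDegree_neg, natDegree_X]
        have h2 : p2.natDegree ≤ r := natDegree_le_iff_degree_le.mpr hd2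
        calc (p2.comp (-X)).degree ≤ ((p2.comp (-X)).natDegree : WithBot ℕ) :=
              degree_le_natDegree
          _ ≤ (r : WithBot ℕ) := by rw [h1]; exact_mod_cast h2
      have hpos2 : ∀ x ∈ Set.Icc (-1 : ℝ) (-(1 / (4 * (r : ℝ) ^ 2))), 0 ≤ (p2.comp (-X)).eval x := by
        intro x ⟨hxa, hxb⟩
        rw [hq]
        rw [← hS2 (-x) ⟨by linarith, by linarith⟩]
        exact hSnn (-x) ⟨by linarith, by linarith⟩
      have hval : M / 2 ≤ |(p2.comp (-X)).eval (-y0)| := by rw [hq]; simpa using hca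
      obtain ⟨a, b, hab, hlen, hsub, hbig⟩ :=
        side_lemma r hr (p2.comp (-X)) hqdeg hpos2 (M / 2) (by linarith) (-y0)
          ⟨by linarith [hy0mem.2], by linarith [hy0mem.1]⟩ hval
      refine ⟨-b, -a, by linarith, by linarith [hlen.ge, hlen.le], Or.inr fun x hx => ?_, ?_⟩
      · obtain ⟨hx1, hx2⟩ := hx
        obtain ⟨h1, h2⟩ := hsub (show -x ∈ Set.Icc a b from ⟨by linarith, by linarith⟩)
        exact ⟨by linarith, by linarith⟩
      · intro x ⟨hx1, hx2⟩
        obtain ⟨h1, h2⟩ := hsub (show -x ∈ Set.Icc a b from ⟨by linarith, by linarith⟩)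
        rw [hS2 x ⟨by linarith, by linarith⟩]
        have := hbig (-x) ⟨by linarith, by linarith⟩
        rw [hq, neg_neg] at this
        have heq : M / 2 / (4 * ((r : ℝ) + 1) ^ 2 * (4 * (r : ℝ)) ^ r * (4 * (r : ℝ) ^ 2) ^ r)
            = 1 / (2 * (4 * ((r : ℝ) + 1) ^ 2 * (4 * (r : ℝ)) ^ r * (4 * (r : ℝ) ^ 2) ^ r)) * M := by
          field_simp
        linarith [heq ▸ this]
end

section
/- Let r ∈ ℕ_0 and let a = z_0 < z_1 < z_2 = b. Let s be a nondecreasing piecewise polynomial function of degree ≤ r + 1 on [a,b] with the only interior knot z_1. Then there exists a nondecreasing piecewise polynomial function s̃ of degree ≤ r + 1 with knots z_0, z_1, z_2, continuous on [a,b], such that ‖s − s̃‖_{L_p[a,b]} ≤ c(p, r, scale(z)) ω_{r+2}(s, [a,b])_p for all 0 < p ≤ ∞; moreover s̃(a) = s(a) and s̃(b) = s(b). -/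
open MeasureTheory Set
open scoped ENNReal NNReal Classical

noncomputable section StatementAux

open MeasureTheory Set Function Filter
open scoped ENNReal NNReal Classical Topology




lemma fwdDiff_pow_zero (h : ℝ) : ∀ n k : ℕ, n < k → (fwdDiff h)^[k] (fun t : ℝ => t ^ n) = 0 := by
  intro n
  induction n using Nat.strong_induction_on with
  | _ n IH =>
    intro k hk
    obtain ⟨k', rfl⟩ : ∃ k', k = k' + 1 := ⟨k - 1, (Nat.succ_pred_eq_of_pos (by omega)).symm⟩
    rw [Function.iterate_succ_apply]
    have hdiff : fwdDiff h (fun t : ℝ => t ^ n)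
        = ∑ j ∈ Finset.range n, (((n.choose j : ℝ) * h ^ (n - j)) • fun t : ℝ => t ^ j) := by
      funext t
      simp only [fwdDiff, Finset.sum_apply, Pi.smul_apply, smul_eq_mul]
      rw [add_pow, Finset.sum_range_succ]
      simp only [Nat.sub_self, pow_zero, Nat.choose_self, Nat.cast_one, mul_one]
      rw [add_sub_cancel_right]
      exact Finset.sum_congr rfl fun j hj => by ring
    rw [hdiff, fwdDiff_iter_finset_sum]
    refine Finset.sum_eq_zero fun j hj => ?_
    have hjn := Finset.mem_range.mp hj
    rw [fwdDiff_iter_const_smul, IH j hjn k' (by omega), smul_zero]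

lemma fwdDiff_iter_polyeval (k : ℕ) (P : Polynomial ℝ) (hP : P.natDegree < k) (h : ℝ) :
    (fwdDiff h)^[k] (fun t : ℝ => P.eval t) = 0 := by
  have heval : (fun t : ℝ => P.eval t)
      = ∑ j ∈ Finset.range (P.natDegree + 1), (P.coeff j • fun t : ℝ => t ^ j) := by
    funext t
    simp only [Finset.sum_apply, Pi.smul_apply, smul_eq_mul]
    exact Polynomial.eval_eq_sum_range t
  rw [heval, fwdDiff_iter_finset_sum]
  refine Finset.sum_eq_zero fun j hj => ?_
  have hjn := Finset.mem_range.mp hj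
  rw [fwdDiff_iter_const_smul, fwdDiff_pow_zero h j k (by omega), smul_zero]

lemma sum_fin_diff_poly (k : ℕ) (P : Polynomial ℝ) (hP : P.natDegree < k) (y h : ℝ) :
    ∑ i ∈ Finset.range (k + 1), (-1 : ℝ) ^ (k - i) * (k.choose i : ℝ) * P.eval (y + i * h) = 0 := by
  have h2 := fwdDiff_iter_eq_sum_shift h (fun t : ℝ => P.eval t) k y
  rw [fwdDiff_iter_polyeval k P hP h] at h2
  simp only [Pi.zero_apply] at h2
  have h3 : (0 : ℝ) = ∑ i ∈ Finset.range (k + 1),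
      (-1 : ℝ) ^ (k - i) * (k.choose i : ℝ) * P.eval (y + i * h) := by
    rw [h2]
    refine Finset.sum_congr rfl fun i _ => ?_
    rw [zsmul_eq_mul, nsmul_eq_mul]
    push_cast
    ring
  exact h3.symm




lemma monotoneOn_Icc_of_Ioo {f : ℝ → ℝ} {a b : ℝ} (hf : Continuous f)
    (h : MonotoneOn f (Ioo a b)) : MonotoneOn f (Icc a b) := by
  intro x hx y hy hxy
  rcases eq_or_lt_of_le hxy with rfl | hlt
  · exact le_refl _
  have hm : (x + y) / 2 ∈ Ioo x y := ⟨by linarith, by linarith⟩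
  have hsub : Ioo x y ⊆ Ioo a b := Ioo_subset_Ioo hx.1 hy.2
  have h1 : f x ≤ f ((x + y) / 2) := by
    have ht : Tendsto f (𝓝[>] x) (𝓝 (f x)) := (hf.tendsto x).mono_left nhdsWithin_le_nhds
    refine le_of_tendsto ht ?_
    filter_upwards [Ioo_mem_nhdsGT_of_mem (⟨le_refl x, hm.1⟩ : x ∈ Ico x ((x + y) / 2))] with t htm
    exact h (hsub ⟨htm.1, htm.2.trans hm.2⟩) (hsub hm) htm.2.le
  have h2 : f ((x + y) / 2) ≤ f y := by
    have ht : Tendsto f (𝓝[<] y) (𝓝 (f y)) := (hf.tendsto y).mono_left nhdsWithin_le_nhds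
    refine ge_of_tendsto ht ?_
    filter_upwards [Ioo_mem_nhdsLT_of_mem (⟨hm.2, le_refl y⟩ : y ∈ Ioc ((x + y) / 2) y)] with t htm
    exact h (hsub hm) (hsub ⟨hm.1.trans htm.1, htm.2⟩) htm.1.le
  linarith




lemma keyC (D : ℕ) : ∃ θ ε0 : ℝ, 0 < θ ∧ 0 < ε0 ∧ ε0 ≤ 1 ∧
    ∀ (G : Polynomial ℝ) (w h : ℝ), 0 < h → G.natDegree ≤ D →
      ENNReal.ofReal (ε0 * h) ≤
        volume {x ∈ Icc w (w + h) | θ * |G.eval w| ≤ |G.eval x|} := by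
  set δ : ℝ := (2 * (D : ℝ) + 2)⁻¹ with hδdef
  have hD0 : (0 : ℝ) ≤ D := Nat.cast_nonneg D
  have hδ : 0 < δ := by positivity
  have hδ1 : δ ≤ 1 := by
    rw [hδdef]
    rw [inv_le_one_iff₀]
    right; linarith
  refine ⟨δ ^ D / (2 * ((D : ℝ) + 1)), δ / 2, by positivity, by positivity, by linarith, ?_⟩
  set θ : ℝ := δ ^ D / (2 * ((D : ℝ) + 1)) with hθdef
  intro G w h hh hdeg
  set A : Set ℝ := {x ∈ Icc w (w + h) | θ * |G.eval w| ≤ |G.eval x|} with hAdef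
  by_contra hcon
  push_neg at hcon
  -- case G.eval w = 0
  by_cases hG0 : G.eval w = 0
  · have hA : Icc w (w + h) ⊆ A := by
      intro x hx
      exact ⟨hx, by rw [hG0]; simp [abs_nonneg]⟩
    have h1 : ENNReal.ofReal h ≤ volume A := by
      calc ENNReal.ofReal h = volume (Icc w (w + h)) := by
            rw [Real.volume_Icc]; congr 1; ring
        _ ≤ volume A := measure_mono hA
    have := h1.trans_lt hcon
    rw [ENNReal.ofReal_lt_ofReal_iff (by positivity)] at this
    nlinarith
  have hGpos : 0 < |G.eval w| := abs_pos.mpr hG0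
  -- pick points t i ∈ I_i \ A
  have hti : ∀ i : Fin (D + 1), ∃ x,
      x ∈ Icc (w + 2 * (i : ℝ) * δ * h) (w + 2 * (i : ℝ) * δ * h + δ * h) ∧ x ∉ A := by
    intro i
    by_contra hc
    push_neg at hc
    have hmono : volume (Icc (w + 2 * (i : ℝ) * δ * h) (w + 2 * (i : ℝ) * δ * h + δ * h))
        ≤ volume A := measure_mono fun x hx => hc x hx
    rw [Real.volume_Icc, add_sub_cancel_left] at hmono
    have := hmono.trans_lt hcon
    rw [ENNReal.ofReal_lt_ofReal_iff (by positivity)] at this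
    nlinarith
  choose t ht1 ht2 using hti
  have htIcc : ∀ i : Fin (D + 1), t i ∈ Icc w (w + h) := by
    intro i
    have hi : ((i : ℕ) : ℝ) ≤ D := by exact_mod_cast Nat.lt_succ_iff.mp i.isLt
    have h1 := (ht1 i).1
    have h2 := (ht1 i).2
    constructor
    · nlinarith
    · have hbound : (2 * (i : ℝ) + 1) * δ ≤ 1 := by
        rw [hδdef]
        rw [← div_eq_mul_inv, div_le_one (by positivity)]
        linarith
      nlinarith
  have htlt : ∀ i : Fin (D + 1), |G.eval (t i)| < θ * |G.eval w| := by
    intro i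
    by_contra hc
    push_neg at hc
    exact ht2 i ⟨htIcc i, hc⟩
  have hsep : ∀ i j : Fin (D + 1), i ≠ j → δ * h ≤ |t i - t j| := by
    have key : ∀ i j : Fin (D + 1), i < j → δ * h ≤ t j - t i := by
      intro i j hij
      have hij' : ((i : ℕ) : ℝ) + 1 ≤ ((j : ℕ) : ℝ) := by exact_mod_cast hij
      have h1 := (ht1 i).2
      have h2 := (ht1 j).1
      have hδh : (0:ℝ) < δ * h := by positivity
      have hfac : (1:ℝ) ≤ 2 * ((j : ℕ) : ℝ) - 2 * ((i : ℕ) : ℝ) - 1 := by linarith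
      nlinarith [le_mul_of_one_le_left hδh.le hfac]
    intro i j hne
    rcases hne.lt_or_gt with hij | hij
    · rw [abs_sub_comm]
      exact (key i j hij).trans (le_abs_self _)
    · exact (key j i hij).trans (le_abs_self _)
  have hinj : Set.InjOn t ↑(Finset.univ : Finset (Fin (D + 1))) := by
    intro i _ j _ he
    by_contra hne
    have := hsep i j hne
    rw [he, sub_self, abs_zero] at this
    nlinarith
  have hcard : (Finset.univ : Finset (Fin (D + 1))).card = D + 1 := by
    rw [Finset.card_univ, Fintype.card_fin]
  have hdeg' : G.degree < ((Finset.univ : Finset (Fin (D + 1))).card : WithBot ℕ) := by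
    rw [hcard]
    exact lt_of_le_of_lt Polynomial.degree_le_natDegree
      (by exact_mod_cast Nat.lt_succ_of_le hdeg)
  have hGw : G.eval w = ∑ i : Fin (D + 1),
      G.eval (t i) * (Lagrange.basis Finset.univ t i).eval w := by
    conv_lhs => rw [Lagrange.eq_interpolate hinj hdeg']
    rw [Lagrange.interpolate_apply, Polynomial.eval_finset_sum]
    exact Finset.sum_congr rfl fun i _ => by rw [Polynomial.eval_mul, Polynomial.eval_C]
  have hbasis : ∀ i : Fin (D + 1), |(Lagrange.basis Finset.univ t i).eval w| ≤ δ⁻¹ ^ D := by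
    intro i
    rw [Lagrange.basis, Polynomial.eval_prod, Finset.abs_prod]
    have hfac : ∀ j ∈ Finset.univ.erase i,
        |(Lagrange.basisDivisor (t i) (t j)).eval w| ≤ δ⁻¹ := by
      intro j hj
      have hji : j ≠ i := (Finset.mem_erase.mp hj).1
      rw [Lagrange.basisDivisor]
      simp only [Polynomial.eval_mul, Polynomial.eval_C, Polynomial.eval_sub, Polynomial.eval_X]
      rw [abs_mul, abs_inv]
      have h1 : |w - t j| ≤ h := by
        have := (htIcc j).1; have := (htIcc j).2
        rw [abs_le]; constructor <;> linarith
      have h2 : δ * h ≤ |t i - t j| := hsep i j hji.symm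
      have h2' : 0 < |t i - t j| := lt_of_lt_of_le (by positivity) h2
      calc |t i - t j|⁻¹ * |w - t j| ≤ (δ * h)⁻¹ * h := by
            apply mul_le_mul _ h1 (abs_nonneg _) (by positivity)
            exact inv_anti₀ (by positivity) h2
        _ = δ⁻¹ := by field_simp
    calc ∏ j ∈ Finset.univ.erase i, |(Lagrange.basisDivisor (t i) (t j)).eval w|
        ≤ ∏ _j ∈ Finset.univ.erase i, δ⁻¹ :=
          Finset.prod_le_prod (fun j _ => abs_nonneg _) hfac
      _ = δ⁻¹ ^ D := by
          rw [Finset.prod_const, Finset.card_erase_of_mem (Finset.mem_univ i), hcard]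
          norm_num
  have habs : |G.eval w| ≤ ((D : ℝ) + 1) * (θ * |G.eval w| * δ⁻¹ ^ D) := by
    calc |G.eval w|
        = |∑ i : Fin (D + 1), G.eval (t i) * (Lagrange.basis Finset.univ t i).eval w| := by
          rw [← hGw]
      _
        ≤ ∑ i : Fin (D + 1), |G.eval (t i) * (Lagrange.basis Finset.univ t i).eval w| :=
          Finset.abs_sum_le_sum_abs _ _
      _ ≤ ∑ _i : Fin (D + 1), θ * |G.eval w| * δ⁻¹ ^ D := by
          refine Finset.sum_le_sum fun i _ => ?_
          rw [abs_mul]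
          exact mul_le_mul (htlt i).le (hbasis i) (abs_nonneg _) (by positivity)
      _ = ((D : ℝ) + 1) * (θ * |G.eval w| * δ⁻¹ ^ D) := by
          rw [Finset.sum_const, hcard, nsmul_eq_mul]
          push_cast; ring
  have hδD : δ ^ D * δ⁻¹ ^ D = 1 := by
    rw [← mul_pow, mul_inv_cancel₀ hδ.ne', one_pow]
  have hcalc : ((D : ℝ) + 1) * (θ * |G.eval w| * δ⁻¹ ^ D) = |G.eval w| / 2 := by
    rw [hθdef]
    field_simp
    rw [one_div]; linarith [hδD]
  rw [hcalc] at habs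
  linarith


end StatementAux

section Statement18Proof

open MeasureTheory Set Function Filter
open scoped ENNReal NNReal Classical Topology

set_option maxHeartbeats 3200000

/-- Corollary 3.11: monotone smoothing, one interior knot. -/
theorem statement18 (r : ℕ) :
    ∃ C : ℝ≥0∞ → ℝ → ℝ≥0,
      ∀ a z1 b : ℝ, a < z1 → z1 < b →
        ∀ (s : ℝ → ℝ) (P0 P1 : Polynomial ℝ),
          P0.degree ≤ ((r + 1 : ℕ) : WithBot ℕ) → P1.degree ≤ ((r + 1 : ℕ) : WithBot ℕ) →
          (∀ x ∈ Set.Ioo a z1, s x = P0.eval x) →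
          (∀ x ∈ Set.Ioo z1 b, s x = P1.eval x) →
          MonotoneOn s (Set.Icc a b) →
          ∃ st : ℝ → ℝ,
            MonotoneOn st (Set.Icc a b) ∧
            ContinuousOn st (Set.Icc a b) ∧
            (∃ Q0 Q1 : Polynomial ℝ, Q0.degree ≤ ((r + 1 : ℕ) : WithBot ℕ) ∧
              Q1.degree ≤ ((r + 1 : ℕ) : WithBot ℕ) ∧
              (∀ x ∈ Set.Ioo a z1, st x = Q0.eval x) ∧
              (∀ x ∈ Set.Ioo z1 b, st x = Q1.eval x)) ∧
            (∀ p : ℝ≥0∞, 0 < p →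
              eLpNorm (fun x => s x - st x) p (volume.restrict (Set.Icc a b)) ≤
                C p (max ((b - z1) / (z1 - a)) ((z1 - a) / (b - z1))) *
                  modulusIcc (r + 2) s a b p) ∧
            st a = P0.eval a ∧ st b = P1.eval b := by
  classical
  obtain ⟨θ, ε0, hθ, hε0, hε01, hkey⟩ := keyC (r + 1)
  refine ⟨fun p σ => (θ⁻¹ * (((r : ℝ) + 2) * (1 + max σ 0) / ε0 + 1) ^ p.toReal⁻¹).toNNReal, ?_⟩
  intro a z1 b h1 h2 s P0 P1 hP0deg hP1deg hs0 hs1 hmono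
  have hab : a < b := h1.trans h2
  have hza : (0 : ℝ) < z1 - a := by linarith
  have hbz : (0 : ℝ) < b - z1 := by linarith
  set J : ℝ := P1.eval z1 - P0.eval z1 with hJdef
  have hP0mono : MonotoneOn (fun x => P0.eval x) (Icc a z1) := by
    refine monotoneOn_Icc_of_Ioo (Polynomial.continuous_aeval P0) ?_
    intro x hx y hy hxy
    simp only
    rw [← hs0 x hx, ← hs0 y hy]
    exact hmono ⟨hx.1.le, by linarith [hx.2]⟩ ⟨hy.1.le, by linarith [hy.2]⟩ hxy
  have hP1mono : MonotoneOn (fun x => P1.eval x) (Icc z1 b) := by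
    refine monotoneOn_Icc_of_Ioo (Polynomial.continuous_aeval P1) ?_
    intro x hx y hy hxy
    simp only
    rw [← hs1 x hx, ← hs1 y hy]
    exact hmono ⟨by linarith [hx.1], hx.2.le⟩ ⟨by linarith [hy.1], hy.2.le⟩ hxy
  have hP0z1 : P0.eval z1 ≤ s z1 := by
    have ht : Tendsto (fun x => P0.eval x) (𝓝[<] z1) (𝓝 (P0.eval z1)) :=
      ((Polynomial.continuous_aeval P0).tendsto z1).mono_left nhdsWithin_le_nhds
    refine le_of_tendsto ht ?_
    filter_upwards [Ioo_mem_nhdsLT_of_mem (⟨h1, le_refl z1⟩ : z1 ∈ Ioc a z1)] with x hx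
    rw [← hs0 x hx]
    exact hmono ⟨hx.1.le, by linarith [hx.2]⟩ ⟨h1.le, h2.le⟩ hx.2.le
  have hsP1z1 : s z1 ≤ P1.eval z1 := by
    have ht : Tendsto (fun x => P1.eval x) (𝓝[>] z1) (𝓝 (P1.eval z1)) :=
      ((Polynomial.continuous_aeval P1).tendsto z1).mono_left nhdsWithin_le_nhds
    refine ge_of_tendsto ht ?_
    filter_upwards [Ioo_mem_nhdsGT_of_mem (⟨le_refl z1, h2⟩ : z1 ∈ Ico z1 b)] with x hx
    rw [← hs1 x hx]
    exact hmono ⟨h1.le, h2.le⟩ ⟨by linarith [hx.1], hx.2.le⟩ hx.1.le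
  have hJ0 : (0 : ℝ) ≤ J := by rw [hJdef]; linarith
  set c0 : ℝ := J / (z1 - a) ^ (r + 1) with hc0def
  have hc00 : 0 ≤ c0 := div_nonneg hJ0 (by positivity)
  set Q0 : Polynomial ℝ := P0 + Polynomial.C c0 * (Polynomial.X - Polynomial.C a) ^ (r + 1)
    with hQ0def
  have hQ0eval : ∀ x, Q0.eval x = P0.eval x + c0 * (x - a) ^ (r + 1) := by
    intro x; simp [hQ0def]
  have hQz1 : Q0.eval z1 = P1.eval z1 := by
    rw [hQ0eval, hc0def]
    have : J / (z1 - a) ^ (r + 1) * (z1 - a) ^ (r + 1) = J := by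
      field_simp
    rw [this, hJdef]; ring
  set st : ℝ → ℝ := fun x => if x ≤ z1 then Q0.eval x else P1.eval x with hstdef
  have hstcont : Continuous st := by
    rw [hstdef]
    exact Continuous.if_le (Polynomial.continuous_aeval Q0) (Polynomial.continuous_aeval P1)
      continuous_id continuous_const (fun x hx => by rw [hx]; exact hQz1)
  have hcorr : MonotoneOn (fun x => c0 * (x - a) ^ (r + 1)) (Icc a z1) := by
    intro x hx y hy hxy
    have hp : (x - a) ^ (r + 1) ≤ (y - a) ^ (r + 1) :=
      pow_le_pow_left₀ (by linarith [hx.1]) (by linarith) _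
    exact mul_le_mul_of_nonneg_left hp hc00
  have hQ0mono : MonotoneOn (fun x => Q0.eval x) (Icc a z1) := by
    have heq : (fun x => Q0.eval x)
        = (fun x => P0.eval x) + (fun x => c0 * (x - a) ^ (r + 1)) := by
      funext x; exact hQ0eval x
    rw [heq]; exact hP0mono.add hcorr
  have hstmono : MonotoneOn st (Icc a b) := by
    intro x hx y hy hxy
    by_cases hx1 : x ≤ z1 <;> by_cases hy1 : y ≤ z1
    · have e1 : st x = Q0.eval x := by simp [hstdef, hx1]
      have e2 : st y = Q0.eval y := by simp [hstdef, hy1]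
      rw [e1, e2]
      exact hQ0mono ⟨hx.1, hx1⟩ ⟨hy.1, hy1⟩ hxy
    · have e1 : st x = Q0.eval x := by simp [hstdef, hx1]
      have e2 : st y = P1.eval y := by simp [hstdef, hy1]
      rw [e1, e2]
      calc Q0.eval x ≤ Q0.eval z1 := hQ0mono ⟨hx.1, hx1⟩ ⟨h1.le, le_refl _⟩ hx1
        _ = P1.eval z1 := hQz1
        _ ≤ P1.eval y := hP1mono ⟨le_refl _, h2.le⟩ ⟨(not_le.mp hy1).le, hy.2⟩ (not_le.mp hy1).le
    · exact absurd (hxy.trans hy1) hx1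
    · have e1 : st x = P1.eval x := by simp [hstdef, hx1]
      have e2 : st y = P1.eval y := by simp [hstdef, hy1]
      rw [e1, e2]
      exact hP1mono ⟨(not_le.mp hx1).le, hx.2⟩ ⟨((not_le.mp hx1).trans_le hxy).le, hy.2⟩ hxy
  refine ⟨st, hstmono, hstcont.continuousOn, ⟨Q0, P1, ?_, hP1deg, ?_, ?_⟩, ?_, ?_, ?_⟩
  · -- degree Q0
    rw [hQ0def]
    refine le_trans (Polynomial.degree_add_le _ _) (max_le hP0deg ?_)
    refine le_trans (Polynomial.degree_mul_le _ _) ?_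
    have hd2 : ((Polynomial.X - Polynomial.C a : Polynomial ℝ) ^ (r + 1)).degree
        ≤ ((r + 1 : ℕ) : WithBot ℕ) := by
      refine le_trans (Polynomial.degree_pow_le _ _) ?_
      rw [Polynomial.degree_X_sub_C]
      simp [nsmul_eq_mul]
    calc (Polynomial.C c0).degree + ((Polynomial.X - Polynomial.C a : Polynomial ℝ) ^ (r+1)).degree
        ≤ 0 + ((r + 1 : ℕ) : WithBot ℕ) := add_le_add Polynomial.degree_C_le hd2
      _ = ((r + 1 : ℕ) : WithBot ℕ) := zero_add _
  · intro x hx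
    simp [hstdef, hx.2.le]
  · intro x hx
    simp [hstdef, not_le.mpr hx.1]
  · -- the Lp estimate
    intro p hp
    have hnull3 : (volume : Measure ℝ) ({a, z1, b} : Set ℝ) = 0 :=
      (Set.to_countable _).measure_zero _
    have hbnd : ∀ᵐ x ∂(volume.restrict (Icc a b)), ‖s x - st x‖ ≤ J := by
      have hae0 : ∀ᵐ x ∂(volume : Measure ℝ), x ∉ ({a, z1, b} : Set ℝ) := by
        exact measure_eq_zero_iff_ae_notMem.mp hnull3
      filter_upwards [ae_restrict_mem measurableSet_Icc, ae_restrict_of_ae hae0] with x hxI hxN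
      simp only [Set.mem_insert_iff, Set.mem_singleton_iff, not_or] at hxN
      obtain ⟨hxa, hxz, hxb⟩ := hxN
      by_cases hx1 : x < z1
      · have hxo : x ∈ Ioo a z1 := ⟨lt_of_le_of_ne hxI.1 (Ne.symm hxa), hx1⟩
        have hstx : st x = Q0.eval x := by simp [hstdef, hx1.le]
        rw [hs0 x hxo, hstx, hQ0eval]
        have hxa' : (0:ℝ) ≤ x - a := by linarith [hxo.1]
        have hb1 : 0 ≤ c0 * (x - a) ^ (r + 1) := by positivity
        have hb2 : c0 * (x - a) ^ (r + 1) ≤ J := by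
          have hpow : (x - a) ^ (r + 1) ≤ (z1 - a) ^ (r + 1) :=
            pow_le_pow_left₀ hxa' (by linarith [hxo.2]) _
          calc c0 * (x - a) ^ (r + 1) ≤ c0 * (z1 - a) ^ (r + 1) :=
                mul_le_mul_of_nonneg_left hpow hc00
            _ = J := by rw [hc0def]; field_simp
        rw [Real.norm_eq_abs]
        have heq : P0.eval x - (P0.eval x + c0 * (x - a) ^ (r + 1))
            = -(c0 * (x - a) ^ (r + 1)) := by ring
        rw [heq, abs_neg, abs_of_nonneg hb1]
        exact hb2
      · have hz1x : z1 < x := lt_of_le_of_ne (not_lt.mp hx1) (Ne.symm hxz)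
        have hxo : x ∈ Ioo z1 b := ⟨hz1x, lt_of_le_of_ne hxI.2 hxb⟩
        have hstx : st x = P1.eval x := by simp [hstdef, not_le.mpr hz1x]
        rw [hs1 x hxo, hstx, sub_self, norm_zero]
        exact hJ0
    have hLHS : eLpNorm (fun x => s x - st x) p (volume.restrict (Icc a b)) ≤
        ENNReal.ofReal (b - a) ^ p.toReal⁻¹ * ENNReal.ofReal J := by
      have := eLpNorm_le_of_ae_bound (p := p) hbnd
      rwa [Measure.restrict_apply_univ, Real.volume_Icc] at this
    rcases eq_or_lt_of_le hJ0 with hJz | hJpos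
    · have hz : eLpNorm (fun x => s x - st x) p (volume.restrict (Icc a b)) ≤ 0 := by
        have h0 : ENNReal.ofReal J = 0 := by rw [← hJz]; simp
        calc eLpNorm (fun x => s x - st x) p (volume.restrict (Icc a b))
            ≤ ENNReal.ofReal (b - a) ^ p.toReal⁻¹ * ENNReal.ofReal J := hLHS
          _ = 0 := by rw [h0, mul_zero]
      exact le_trans hz zero_le
    · -- main case J > 0
      set d : ℝ := min (z1 - a) (b - z1) with hddef
      have hd : 0 < d := lt_min hza hbz
      set hstep : ℝ := d / ((r : ℝ) + 2) with hhdef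
      have hh : 0 < hstep := by positivity
      have hkh : ((r : ℝ) + 2) * hstep = d := by rw [hhdef]; field_simp
      have hhd : hstep ≤ d := by
        rw [hhdef]
        have hr0 : (0:ℝ) ≤ (r:ℝ) := Nat.cast_nonneg r
        exact div_le_self hd.le (by linarith)
      have hda : d ≤ z1 - a := min_le_left _ _
      have hdb : d ≤ b - z1 := min_le_right _ _
      have hcast : ((r + 2 : ℕ) : ℝ) = (r : ℝ) + 2 := by push_cast; ring
      have hd2 : ((r + 2 : ℕ) : ℝ) * hstep / 2 = d / 2 := by rw [hcast, hkh]
      set w0 : ℝ := z1 - d / 2 with hw0def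
      set g2 : Polynomial ℝ := (P1 - P0).comp (Polynomial.X + Polynomial.C (d / 2)) with hg2def
      have hg2eval : ∀ x, g2.eval x = P1.eval (x + d / 2) - P0.eval (x + d / 2) := by
        intro x; simp [hg2def, Polynomial.eval_comp]
      have hg2w0 : g2.eval w0 = J := by
        rw [hg2eval, hw0def, sub_add_cancel, hJdef]
      have hg2deg : g2.natDegree ≤ r + 1 := by
        rw [hg2def, Polynomial.natDegree_comp, Polynomial.natDegree_X_add_C, mul_one]
        exact (Polynomial.natDegree_sub_le _ _).trans (max_le
          (Polynomial.natDegree_le_iff_degree_le.mpr hP1deg)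
          (Polynomial.natDegree_le_iff_degree_le.mpr hP0deg))
      set Δ : ℝ → ℝ := symmDiffk s (r + 2) hstep (Icc a b) with hΔdef
      have claim1 : ∀ y ∈ Ioo w0 (w0 + hstep), Δ y = g2.eval y := by
        intro y hy
        obtain ⟨hyl, hyr⟩ := hy
        rw [hw0def] at hyl hyr
        have hnode : ∀ i : ℕ, i ≤ r + 1 → y - d / 2 + i * hstep ∈ Ioo a z1 := by
          intro i hi
          have hi' : (i : ℝ) ≤ (r : ℝ) + 1 := by exact_mod_cast hi
          have hih : (0 : ℝ) ≤ (i : ℝ) * hstep := by positivity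
          constructor
          · linarith
          · have h5 : (i : ℝ) * hstep ≤ ((r : ℝ) + 1) * hstep :=
              mul_le_mul_of_nonneg_right hi' hh.le
            linarith [hkh]
        have hcond : y - ((r + 2 : ℕ) : ℝ) * hstep / 2 ∈ Icc a b ∧
            y + ((r + 2 : ℕ) : ℝ) * hstep / 2 ∈ Icc a b := by
          rw [hd2]
          refine ⟨⟨by linarith, by linarith⟩, ⟨by linarith, by linarith⟩⟩
        rw [hΔdef]
        simp only [symmDiffk]
        rw [if_pos hcond]
        simp only [hd2]
        have hA := sum_fin_diff_poly (r + 2) P0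
          (by have := Polynomial.natDegree_le_iff_degree_le.mpr hP0deg; omega) (y - d / 2) hstep
        rw [Finset.sum_range_succ] at hA ⊢
        have hcongr : ∀ i ∈ Finset.range (r + 2),
            (-1 : ℝ) ^ (r + 2 - i) * ((r + 2).choose i : ℝ) * s (y - d / 2 + i * hstep)
            = (-1 : ℝ) ^ (r + 2 - i) * ((r + 2).choose i : ℝ)
              * P0.eval (y - d / 2 + i * hstep) := by
          intro i hi
          rw [hs0 _ (hnode i (by have := Finset.mem_range.mp hi; omega))]
        rw [Finset.sum_congr rfl hcongr]
        have hnn : y - d / 2 + ((r + 2 : ℕ) : ℝ) * hstep = y + d / 2 := by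
          rw [hcast, hkh]; ring
        have hlast : s (y - d / 2 + ((r + 2 : ℕ) : ℝ) * hstep)
            = P1.eval (y - d / 2 + ((r + 2 : ℕ) : ℝ) * hstep) := by
          apply hs1
          rw [hnn]
          exact ⟨by linarith, by linarith⟩
        rw [hlast]
        simp only [Nat.sub_self, pow_zero, Nat.choose_self, Nat.cast_one, one_mul] at hA ⊢
        rw [hnn] at hA ⊢
        rw [hg2eval]
        linarith [hA]
      have hΔm : AEStronglyMeasurable Δ (volume.restrict (Icc a b)) := by
        set q : ℝ → ℝ := fun t => if t ≤ z1 then P0.eval t else P1.eval t with hqdef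
        have hqm : Measurable q := Measurable.ite measurableSet_Iic
          (Polynomial.continuous_aeval P0).measurable (Polynomial.continuous_aeval P1).measurable
        set F : ℝ → ℝ := fun y =>
          if y - ((r + 2 : ℕ) : ℝ) * hstep / 2 ∈ Icc a b ∧
              y + ((r + 2 : ℕ) : ℝ) * hstep / 2 ∈ Icc a b then
            ∑ i ∈ Finset.range (r + 2 + 1),
              (-1 : ℝ) ^ (r + 2 - i) * ((r + 2).choose i : ℝ)
                * q (y - ((r + 2 : ℕ) : ℝ) * hstep / 2 + i * hstep)
          else 0 with hFdef
        have hFm : Measurable F := by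
          apply Measurable.ite
          · have hset : {y : ℝ | y - ((r + 2 : ℕ) : ℝ) * hstep / 2 ∈ Icc a b ∧
                y + ((r + 2 : ℕ) : ℝ) * hstep / 2 ∈ Icc a b}
                = ((fun y : ℝ => y - ((r + 2 : ℕ) : ℝ) * hstep / 2) ⁻¹' Icc a b)
                  ∩ ((fun y : ℝ => y + ((r + 2 : ℕ) : ℝ) * hstep / 2) ⁻¹' Icc a b) := rfl
            rw [hset]
            exact ((measurable_id.sub_const _) measurableSet_Icc).inter
              ((measurable_id.add_const _) measurableSet_Icc)
          · refine Finset.measurable_sum _ fun i _ => ?_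
            exact (hqm.comp ((measurable_id.sub_const _).add_const _)).const_mul _
          · exact measurable_const
        set E : Set ℝ := ⋃ i ∈ Finset.range (r + 2 + 1),
          ({a + ((r + 2 : ℕ) : ℝ) * hstep / 2 - i * hstep,
            z1 + ((r + 2 : ℕ) : ℝ) * hstep / 2 - i * hstep,
            b + ((r + 2 : ℕ) : ℝ) * hstep / 2 - i * hstep} : Set ℝ) with hEdef
        have hEc : E.Countable := Set.Countable.biUnion (Set.to_countable _)
          (fun i _ => Set.to_countable _)
        have hE0 : volume E = 0 := hEc.measure_zero _
        have hΔF : ∀ y, y ∉ E → Δ y = F y := by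
          intro y hyE
          rw [hΔdef, hFdef]
          simp only [symmDiffk]
          by_cases hcond : y - ((r + 2 : ℕ) : ℝ) * hstep / 2 ∈ Icc a b ∧
              y + ((r + 2 : ℕ) : ℝ) * hstep / 2 ∈ Icc a b
          · rw [if_pos hcond, if_pos hcond]
            refine Finset.sum_congr rfl fun i hi => ?_
            congr 1
            set node : ℝ := y - ((r + 2 : ℕ) : ℝ) * hstep / 2 + i * hstep with hnodedef
            have hiR : (i : ℝ) ≤ ((r + 2 : ℕ) : ℝ) := by
              have hi' := Finset.mem_range.mp hi
              exact_mod_cast Nat.le_of_lt_succ hi'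
            have hnIcc : node ∈ Icc a b := by
              obtain ⟨⟨ha1, ha2⟩, hb1, hb2⟩ := hcond
              have hp1 : (0 : ℝ) ≤ (i : ℝ) * hstep := by positivity
              have hp2 : (i : ℝ) * hstep ≤ ((r + 2 : ℕ) : ℝ) * hstep :=
                mul_le_mul_of_nonneg_right hiR hh.le
              exact ⟨by rw [hnodedef]; linarith, by rw [hnodedef]; linarith⟩
            have hnea : node ≠ a := by
              intro he
              apply hyE
              have hy' : y = a + ((r + 2 : ℕ) : ℝ) * hstep / 2 - i * hstep := by
                rw [hnodedef] at he; linarith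
              simp only [hEdef, Set.mem_iUnion, Set.mem_insert_iff, Set.mem_singleton_iff]
              exact ⟨i, hi, Or.inl hy'⟩
            have hnez : node ≠ z1 := by
              intro he
              apply hyE
              have hy' : y = z1 + ((r + 2 : ℕ) : ℝ) * hstep / 2 - i * hstep := by
                rw [hnodedef] at he; linarith
              simp only [hEdef, Set.mem_iUnion, Set.mem_insert_iff, Set.mem_singleton_iff]
              exact ⟨i, hi, Or.inr (Or.inl hy')⟩
            have hneb : node ≠ b := by
              intro he
              apply hyE
              have hy' : y = b + ((r + 2 : ℕ) : ℝ) * hstep / 2 - i * hstep := by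
                rw [hnodedef] at he; linarith
              simp only [hEdef, Set.mem_iUnion, Set.mem_insert_iff, Set.mem_singleton_iff]
              exact ⟨i, hi, Or.inr (Or.inr hy')⟩
            rcases lt_or_ge node z1 with hlt | hge
            · have hmem : node ∈ Ioo a z1 := ⟨lt_of_le_of_ne hnIcc.1 (Ne.symm hnea), hlt⟩
              rw [hs0 _ hmem, hqdef]
              simp [hlt.le]
            · have hgt : z1 < node := lt_of_le_of_ne hge (Ne.symm hnez)
              have hmem : node ∈ Ioo z1 b := ⟨hgt, lt_of_le_of_ne hnIcc.2 hneb⟩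
              rw [hs1 _ hmem, hqdef]
              simp [not_le.mpr hgt]
          · rw [if_neg hcond, if_neg hcond]
        have hae : Δ =ᵐ[volume] F := by
          have h0 : volume {y | ¬ Δ y = F y} = 0 := by
            refine measure_mono_null ?_ hE0
            intro y hy
            by_contra hyE
            exact hy (hΔF y hyE)
          rw [Filter.eventuallyEq_iff_exists_mem]
          exact ⟨{y | Δ y = F y}, by rwa [MeasureTheory.mem_ae_iff, compl_setOf], fun y hy => hy⟩
        exact hFm.aestronglyMeasurable.congr (ae_restrict_of_ae hae.symm)
      have hm' : ENNReal.ofReal (ε0 * hstep) ≤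
          volume.restrict (Icc a b) {y | ENNReal.ofReal (θ * J) ≤ (‖Δ y‖₊ : ℝ≥0∞)} := by
        have hkeyS := hkey g2 w0 hstep hh hg2deg
        rw [hg2w0, abs_of_pos hJpos] at hkeyS
        rw [Measure.restrict_apply' measurableSet_Icc]
        have hsub : {x ∈ Icc w0 (w0 + hstep) | θ * J ≤ |g2.eval x|} \ ({w0, w0 + hstep} : Set ℝ)
            ⊆ {y | ENNReal.ofReal (θ * J) ≤ (‖Δ y‖₊ : ℝ≥0∞)} ∩ Icc a b := by
          rintro y ⟨⟨hyI, hyb⟩, hyE⟩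
          simp only [Set.mem_insert_iff, Set.mem_singleton_iff, not_or] at hyE
          have hyo : y ∈ Ioo w0 (w0 + hstep) :=
            ⟨lt_of_le_of_ne hyI.1 (Ne.symm hyE.1), lt_of_le_of_ne hyI.2 hyE.2⟩
          refine ⟨?_, ?_⟩
          · show ENNReal.ofReal (θ * J) ≤ (‖Δ y‖₊ : ℝ≥0∞)
            rw [claim1 y hyo, ← enorm_eq_nnnorm, Real.enorm_eq_ofReal_abs]
            exact ENNReal.ofReal_le_ofReal hyb
          · obtain ⟨hyl, hyr⟩ := hyo
            rw [hw0def] at hyl hyr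
            exact ⟨by linarith, by linarith⟩
        calc ENNReal.ofReal (ε0 * hstep)
            ≤ volume {x ∈ Icc w0 (w0 + hstep) | θ * J ≤ |g2.eval x|} := hkeyS
          _ = volume ({x ∈ Icc w0 (w0 + hstep) | θ * J ≤ |g2.eval x|}
              \ ({w0, w0 + hstep} : Set ℝ)) :=
              (measure_diff_null ((Set.to_countable _).measure_zero _)).symm
          _ ≤ volume ({y | ENNReal.ofReal (θ * J) ≤ (‖Δ y‖₊ : ℝ≥0∞)} ∩ Icc a b) :=
              measure_mono hsub
      have hmem : hstep ∈ Ioc (0 : ℝ) (b - a) := ⟨hh, by linarith⟩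
      have hNle : eLpNorm Δ p (volume.restrict (Icc a b)) ≤ modulusIcc (r + 2) s a b p := by
        rw [hΔdef]
        simp only [modulusIcc, modulus]
        exact le_biSup
          (fun h' => eLpNorm (symmDiffk s (r + 2) h' (Icc a b)) p (volume.restrict (Icc a b)))
          hmem
      have he0 : (0 : ℝ) ≤ p.toReal⁻¹ := by positivity
      have hmodge : ENNReal.ofReal (θ * J) * ENNReal.ofReal (ε0 * hstep) ^ p.toReal⁻¹ ≤
          modulusIcc (r + 2) s a b p := by
        by_cases hptop : p = ∞
        · subst hptop
          have he : (⊤ : ℝ≥0∞).toReal⁻¹ = 0 := by simp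
          rw [he, ENNReal.rpow_zero, mul_one]
          refine le_trans ?_ hNle
          rw [eLpNorm_exponent_top]
          by_contra hc
          push_neg at hc
          have h0 : volume.restrict (Icc a b) {y | ENNReal.ofReal (θ * J) ≤ (‖Δ y‖₊ : ℝ≥0∞)}
              = 0 := by
            refine measure_mono_null ?_
              (meas_eLpNormEssSup_lt (f := Δ) (μ := volume.restrict (Icc a b)))
            intro y hy
            exact lt_of_lt_of_le hc hy
          rw [h0] at hm'
          simp only [le_zero_iff, ENNReal.ofReal_eq_zero] at hm'
          nlinarith
        · have hp0 : p ≠ 0 := hp.ne'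
          have hpt : 0 < p.toReal := ENNReal.toReal_pos hp0 hptop
          have hmark := mul_meas_ge_le_pow_eLpNorm' (volume.restrict (Icc a b)) hp0 hptop hΔm
            (ENNReal.ofReal (θ * J))
          have h1 := ENNReal.rpow_le_rpow hmark he0
          rw [ENNReal.mul_rpow_of_nonneg _ _ he0, ← ENNReal.rpow_mul, ← ENNReal.rpow_mul,
            mul_inv_cancel₀ hpt.ne', ENNReal.rpow_one, ENNReal.rpow_one] at h1
          refine le_trans (le_trans ?_ h1) hNle
          exact mul_le_mul_right (ENNReal.rpow_le_rpow hm' he0) _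
      refine le_trans hLHS (le_trans ?_ (mul_le_mul_right hmodge _))
      set σ : ℝ := max ((b - z1) / (z1 - a)) ((z1 - a) / (b - z1)) with hσdef
      set e : ℝ := p.toReal⁻¹ with hedef
      set B : ℝ := ((r : ℝ) + 2) * (1 + max σ 0) / ε0 + 1 with hBdef
      have hσ0 : 0 ≤ σ := le_trans (by positivity) (le_max_left _ _)
      have hmax : max σ 0 = σ := max_eq_left hσ0
      have hB1 : (0 : ℝ) < B := by rw [hBdef]; positivity
      have hba : b - a ≤ ε0 * hstep * B := by
        rw [hBdef, hmax]
        have h6 : ε0 * hstep * (((r : ℝ) + 2) * (1 + σ) / ε0 + 1)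
            = ((r : ℝ) + 2) * hstep * (1 + σ) + ε0 * hstep := by
          field_simp
        rw [h6, hkh]
        have h7 : b - a ≤ d * (1 + σ) := by
          rcases min_choice (z1 - a) (b - z1) with hc | hc <;> rw [← hddef] at hc
          · have hσ1 : (b - z1) / (z1 - a) ≤ σ := le_max_left _ _
            have he1 : (z1 - a) * ((b - z1) / (z1 - a)) = b - z1 := by field_simp
            have := mul_le_mul_of_nonneg_left hσ1 hza.le
            rw [he1] at this
            rw [hc]
            nlinarith
          · have hσ1 : (z1 - a) / (b - z1) ≤ σ := le_max_right _ _
            have he1 : (b - z1) * ((z1 - a) / (b - z1)) = z1 - a := by field_simp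
            have := mul_le_mul_of_nonneg_left hσ1 hbz.le
            rw [he1] at this
            rw [hc]
            nlinarith
        nlinarith [mul_pos hε0 hh]
      have hcoe : (((θ⁻¹ * B ^ e).toNNReal : ℝ≥0) : ℝ≥0∞) = ENNReal.ofReal (θ⁻¹ * B ^ e) := rfl
      rw [hcoe, ENNReal.ofReal_rpow_of_pos (show (0:ℝ) < ε0 * hstep by positivity),
        ENNReal.ofReal_rpow_of_pos (show (0:ℝ) < b - a by linarith),
        ← ENNReal.ofReal_mul (Real.rpow_nonneg (show (0:ℝ) ≤ b - a by linarith) e),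
        ← ENNReal.ofReal_mul (mul_nonneg hθ.le hJ0),
        ← ENNReal.ofReal_mul (mul_nonneg (inv_nonneg.mpr hθ.le) (Real.rpow_nonneg hB1.le e))]
      apply ENNReal.ofReal_le_ofReal
      have hstep1 : (b - a) ^ e ≤ (ε0 * hstep * B) ^ e :=
        Real.rpow_le_rpow (by linarith) hba he0
      rw [Real.mul_rpow (by positivity) hB1.le] at hstep1
      have hθθ : θ⁻¹ * θ = 1 := inv_mul_cancel₀ hθ.ne'
      calc (b - a) ^ e * J ≤ (ε0 * hstep) ^ e * B ^ e * J :=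
            mul_le_mul_of_nonneg_right hstep1 hJ0
        _ = (θ⁻¹ * θ) * ((ε0 * hstep) ^ e * B ^ e * J) := by rw [hθθ, one_mul]
        _ = θ⁻¹ * B ^ e * (θ * J * (ε0 * hstep) ^ e) := by ring
  · simp [hstdef, h1.le, hQ0eval, sub_self, zero_pow]
  · simp [hstdef, not_le.mpr h2]

end Statement18Proof
end

section
/- Let δ > 0 and n, m ∈ ℕ. (i) If m ≥ n/δ, then the uniform partition U_m is a δ-remesh of U_n, i.e., U_m ∈ R_δ(U_n). (ii) If m ≥ max(25/δ, 1) · n, then the Chebyshev partition Ch_m is a δ-remesh of Ch_n, i.e., Ch_m ∈ R_δ(Ch_n). -/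
set_option maxHeartbeats 1000000


open MeasureTheory Set
open scoped ENNReal NNReal Classical

section Helpers
open Real

lemma my_sin_le_min (x : ℝ) (h0 : 0 ≤ x) (h1 : x ≤ π) : Real.sin x ≤ min x (π - x) := by
  refine le_min (Real.sin_le h0) ?_
  rw [← Real.sin_pi_sub]; exact Real.sin_le (by linarith)

lemma my_sin_ge_min (x : ℝ) (h0 : 0 ≤ x) (h1 : x ≤ π) :
    2 / π * min x (π - x) ≤ Real.sin x := by
  rcases le_total x (π - x) with h | h
  · rw [min_eq_left h]; exact Real.mul_le_sin h0 (by linarith)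
  · rw [min_eq_right h, ← Real.sin_pi_sub]
    exact Real.mul_le_sin (by linarith) (by linarith)

lemma cheb_core (δ i m j n ν : ℝ) (hδ : 0 < δ) (hi : 0 ≤ i) (hν : 0 ≤ ν) (hj : 0 ≤ j)
    (hn1 : 1 ≤ n) (hnm : n ≤ m) (him : i + 1 ≤ m) (hνn : ν + 1 ≤ n)
    (h1 : i * n < (j + 1) * m) (h2 : j * m < (i + 1) * n)
    (hjν : j ≤ ν + 1) (hνj : ν ≤ j + 1) (h25 : 25 * n ≤ δ * m) :
    2 * Real.sin ((2*i+1)*π/(2*m)) * Real.sin (π/(2*m)) ≤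
      δ * (2 * Real.sin ((2*ν+1)*π/(2*n)) * Real.sin (π/(2*n))) := by
  have hπ := Real.pi_pos
  have hn0 : (0:ℝ) < n := by linarith
  have hm0 : (0:ℝ) < m := by linarith
  set A := (2*i+1)*π/(2*m) with hA
  set B := (2*ν+1)*π/(2*n) with hB
  have hA0 : 0 ≤ A := by positivity
  have hAπ : A ≤ π := by rw [hA, div_le_iff₀ (by positivity)]; nlinarith
  have hB0 : 0 ≤ B := by positivity
  have hBπ : B ≤ π := by rw [hB, div_le_iff₀ (by positivity)]; nlinarith
  have hsA := my_sin_le_min A hA0 hAπ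
  have hsB := my_sin_ge_min B hB0 hBπ
  have hss : Real.sin (π/(2*m)) ≤ π/(2*m) := Real.sin_le (by positivity)
  have hst : 2/π * (π/(2*n)) ≤ Real.sin (π/(2*n)) := by
    refine Real.mul_le_sin (by positivity) ?_
    rw [div_le_div_iff₀ (by positivity) (by norm_num)]; nlinarith
  have hst' : 1/n ≤ Real.sin (π/(2*n)) := by
    have e : 2/π * (π/(2*n)) = 1/n := by field_simp
    linarith [e ▸ hst]
  set M := min B (π - B) with hM
  have hM0 : 0 ≤ M := le_min hB0 (by linarith)
  -- key combinatorial inequality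
  have hkey : min A (π - A) ≤ 5 * M := by
    rcases le_total B (π - B) with hb | hb
    · rw [hM, min_eq_left hb]
      refine le_trans (min_le_left _ _) ?_
      have hpure : (2*i+1)*n ≤ 5*(2*ν+1)*m := by
        nlinarith [mul_nonneg hm0.le (by linarith : (0:ℝ) ≤ ν + 1 - j),
          mul_nonneg hm0.le hν]
      rw [hA, hB, mul_div_assoc' 5, div_le_div_iff₀ (by positivity) (by positivity)]
      nlinarith [mul_le_mul_of_nonneg_right hpure hπ.le]
    · rw [hM, min_eq_right hb]
      refine le_trans (min_le_right _ _) ?_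
      have hpure : (2*(m-i)-1)*n ≤ 5*(2*(n-ν)-1)*m := by
        rcases le_or_gt (j + 2) n with hc | hc
        · nlinarith [mul_nonneg hm0.le (by linarith : (0:ℝ) ≤ n - j - 2),
            mul_nonneg hm0.le (by linarith : (0:ℝ) ≤ j + 1 - ν)]
        · nlinarith [mul_nonneg hm0.le (by linarith : (0:ℝ) ≤ j + 2 - n),
            mul_nonneg hm0.le (by linarith : (0:ℝ) ≤ n - ν - 1)]
      have eA : π - A = (2*(m-i)-1)*π/(2*m) := by rw [hA]; field_simp; ring
      have eB : π - B = (2*(n-ν)-1)*π/(2*n) := by rw [hB]; field_simp; ring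
      rw [eA, eB, mul_div_assoc' 5, div_le_div_iff₀ (by positivity) (by positivity)]
      nlinarith [mul_le_mul_of_nonneg_right hpure hπ.le]
  -- assemble
  have hsA0 : 0 ≤ Real.sin A := Real.sin_nonneg_of_nonneg_of_le_pi hA0 hAπ
  have hss0 : 0 ≤ Real.sin (π/(2*m)) := by
    apply Real.sin_nonneg_of_nonneg_of_le_pi (by positivity)
    rw [div_le_iff₀ (by positivity)]; nlinarith
  have step1 : 2 * Real.sin A * Real.sin (π/(2*m)) ≤ 2 * (5*M) * (π/(2*m)) := by
    have h5 : Real.sin A ≤ 5 * M := le_trans hsA hkey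
    exact mul_le_mul (by linarith) hss hss0 (by positivity)
  have step2 : δ * (2 * (2/π * M) * (1/n)) ≤ δ * (2 * Real.sin B * Real.sin (π/(2*n))) := by
    have hsB0 : 0 ≤ Real.sin B := Real.sin_nonneg_of_nonneg_of_le_pi hB0 hBπ
    refine mul_le_mul_of_nonneg_left ?_ hδ.le
    exact mul_le_mul (by linarith) hst' (by positivity) (by linarith)
  have middle : 2 * (5*M) * (π/(2*m)) ≤ δ * (2 * (2/π * M) * (1/n)) := by
    rw [show (2:ℝ) * (5*M) * (π/(2*m)) = (10*M*π)/(2*m) by ring,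
      show δ * (2 * (2/π * M) * (1/n)) = (4*δ*M/π)/n by ring,
      div_le_div_iff₀ (by positivity) hn0, div_mul_eq_mul_div, le_div_iff₀ hπ]
    have hπ4 : π ≤ 4 := Real.pi_le_four
    nlinarith [mul_nonneg hM0 (by linarith : (0:ℝ) ≤ δ*m - 25*n),
      mul_nonneg (mul_nonneg hM0 hn0.le) (by nlinarith : (0:ℝ) ≤ 16 - π^2)]
  linarith

end Helpers

open Real in
lemma cheb_diff (N k : ℕ) : chebP N (k+1) - chebP N k =
    2 * Real.sin ((2*(k:ℝ)+1)*π/(2*N)) * Real.sin (π/(2*N)) := by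
  unfold chebP
  push_cast
  rw [show -Real.cos (((k:ℝ)+1)*π/N) - -Real.cos ((k:ℝ)*π/N)
      = Real.cos ((k:ℝ)*π/N) - Real.cos (((k:ℝ)+1)*π/N) by ring,
    Real.cos_sub_cos,
    show ((k:ℝ)*π/N + ((k:ℝ)+1)*π/N)/2 = (2*(k:ℝ)+1)*π/(2*N) by ring,
    show ((k:ℝ)*π/N - ((k:ℝ)+1)*π/N)/2 = -(π/(2*N)) by ring,
    Real.sin_neg]
  ring

/-- remesh properties of uniform and Chebyshev partitions. -/
theorem statement19 (δ : ℝ) (hδ : 0 < δ) (n m : ℕ) (hn : 1 ≤ n) (hm : 1 ≤ m) :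
    ((n : ℝ) / δ ≤ (m : ℝ) → IsRemesh δ (uniformP n) n (uniformP m) m) ∧
    (max (25 / δ) 1 * (n : ℝ) ≤ (m : ℝ) → IsRemesh δ (chebP n) n (chebP m) m) := by
  have hm0 : (0:ℝ) < m := by exact_mod_cast hm
  have hn0 : (0:ℝ) < n := by exact_mod_cast hn
  constructor
  · intro hle j hj i hi _ ν _ _ hνn
    have e1 : uniformP m (i+1) - uniformP m i = 2/m := by unfold uniformP; push_cast; ring
    have e2 : uniformP n (ν+1) - uniformP n ν = 2/n := by unfold uniformP; push_cast; ring
    rw [e1, e2]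
    have hnd : (n:ℝ) ≤ δ * m := by rw [div_le_iff₀ hδ] at hle; linarith
    rw [div_le_iff₀ hm0, show δ * (2/(n:ℝ)) * m = (2*(δ*m))/n by ring, le_div_iff₀ hn0]
    nlinarith
  · intro hmax j hj i hi hne ν hν1 hν2 hνn
    have hπ := Real.pi_pos
    have hnm : (n:ℝ) ≤ m := by
      calc (n:ℝ) = 1 * n := by ring
      _ ≤ max (25/δ) 1 * n := by gcongr; exact le_max_right _ _
      _ ≤ m := hmax
    have h25 : 25*(n:ℝ) ≤ δ*m := by
      have h1 : (25/δ)*(n:ℝ) ≤ m :=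
        le_trans (mul_le_mul_of_nonneg_right (le_max_left _ _) hn0.le) hmax
      rw [div_mul_eq_mul_div, div_le_iff₀ hδ] at h1; linarith
    obtain ⟨x, ⟨hxa, hxb⟩, hxc, hxd⟩ := hne
    have ha : chebP m i < chebP n (j+1) := lt_of_le_of_lt hxa hxd
    have hb : chebP n j < chebP m (i+1) := lt_of_lt_of_le hxc hxb
    have him' : (i:ℝ)+1 ≤ m := by exact_mod_cast Nat.cast_le.mpr (Nat.succ_le_of_lt hi)
    have hjn' : (j:ℝ)+1 ≤ n := by exact_mod_cast Nat.cast_le.mpr (Nat.succ_le_of_lt hj)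
    have hνn' : (ν:ℝ)+1 ≤ n := by exact_mod_cast Nat.cast_le.mpr (Nat.succ_le_of_lt hνn)
    have hjν : (j:ℝ) ≤ ν + 1 := by
      have : j ≤ ν + 1 := by omega
      exact_mod_cast Nat.cast_le.mpr this
    have hνj : (ν:ℝ) ≤ j + 1 := by exact_mod_cast Nat.cast_le.mpr hν2
    have hmem1 : (i:ℝ)*Real.pi/m ∈ Set.Icc 0 Real.pi :=
      ⟨by positivity, by rw [div_le_iff₀ hm0]; nlinarith⟩
    have hmem2 : ((j:ℝ)+1)*Real.pi/n ∈ Set.Icc 0 Real.pi :=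
      ⟨by positivity, by rw [div_le_iff₀ hn0]; nlinarith⟩
    have hmem3 : ((i:ℝ)+1)*Real.pi/m ∈ Set.Icc 0 Real.pi :=
      ⟨by positivity, by rw [div_le_iff₀ hm0]; nlinarith⟩
    have hmem4 : (j:ℝ)*Real.pi/n ∈ Set.Icc 0 Real.pi :=
      ⟨by positivity, by rw [div_le_iff₀ hn0]; nlinarith⟩
    have hang1 : (i:ℝ)*Real.pi/m < ((j:ℝ)+1)*Real.pi/n := by
      refine (Real.strictAntiOn_cos.lt_iff_gt hmem2 hmem1).mp ?_
      unfold chebP at ha; push_cast at ha; linarith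
    have hang2 : (j:ℝ)*Real.pi/n < ((i:ℝ)+1)*Real.pi/m := by
      refine (Real.strictAntiOn_cos.lt_iff_gt hmem3 hmem4).mp ?_
      unfold chebP at hb; push_cast at hb; linarith
    have h1 : (i:ℝ)*n < ((j:ℝ)+1)*m := by
      rw [div_lt_div_iff₀ hm0 hn0] at hang1; nlinarith
    have h2 : (j:ℝ)*m < ((i:ℝ)+1)*n := by
      rw [div_lt_div_iff₀ hn0 hm0] at hang2; nlinarith
    rw [cheb_diff m i, cheb_diff n ν]
    exact cheb_core δ i m j n ν hδ (Nat.cast_nonneg i) (Nat.cast_nonneg ν)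
      (Nat.cast_nonneg j) (by exact_mod_cast hn) hnm him' hνn' h1 h2 hjν hνj h25
end
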